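/- Let v be a vertex of G, and suppose every maximum independent set of G contains v. If u is a neighbor of v such that every other neighbor of u is adjacent to v except exactly one vertex w (i.e., N(u) \ N[v] = {w}), then every maximum independent set of G contains w. -/

import Mathlib

variable {V : Type*} [Fintype V] [DecidableEq V]

def IsIndep (G : SimpleGraph V) (I : Finset V) : Prop :=
  ∀ u ∈ I, ∀ v ∈ I, ¬ G.Adj u v

def IsMaxIndep (G : SimpleGraph V) (I : Finset V) : Prop :=
  IsIndep G I ∧ ∀ J : Finset V, IsIndep G J → J.card ≤ I.card

theorem unconfined_invariant (G : SimpleGraph V) [DecidableRel G.Adj] (u v w : V)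
    (hv : ∀ I : Finset V, IsMaxIndep G I → v ∈ I)
    (huv : G.Adj u v)
    (hw : G.neighborFinset u \ insert v (G.neighborFinset v) = {w}) :
    ∀ I : Finset V, IsMaxIndep G I → w ∈ I := by
  intro I hI
  by_contra hwI
  have hvI := hv I hI
  have huI : u ∉ I := fun h => hI.1 u h v hvI huv
  -- key: if b ∈ I with b ≠ v, then u is not adjacent to b
  have key : ∀ b ∈ I, b ≠ v → ¬ G.Adj u b := by
    intro b hbI hbv hab
    have h1 : b ∈ G.neighborFinset u := by
      simpa [SimpleGraph.mem_neighborFinset] using hab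
    have h2 : b ∉ insert v (G.neighborFinset v) := by
      simp only [Finset.mem_insert, SimpleGraph.mem_neighborFinset]
      push_neg
      exact ⟨hbv, fun h => hI.1 v hvI b hbI h⟩
    have : b ∈ G.neighborFinset u \ insert v (G.neighborFinset v) :=
      Finset.mem_sdiff.mpr ⟨h1, h2⟩
    rw [hw, Finset.mem_singleton] at this
    exact hwI (this ▸ hbI)
  set J := insert u (I.erase v) with hJ
  have hJindep : IsIndep G J := by
    intro a ha b hb hab
    simp only [hJ, Finset.mem_insert, Finset.mem_erase] at ha hb
    rcases ha with rfl | ⟨hav, haI⟩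
    · rcases hb with rfl | ⟨hbv, hbI⟩
      · exact G.loopless.irrefl _ hab
      · exact key b hbI hbv hab
    · rcases hb with rfl | ⟨hbv, hbI⟩
      · exact key a haI hav hab.symm
      · exact hI.1 a haI b hbI hab
  have huJ : u ∉ I.erase v := fun h => huI (Finset.mem_of_mem_erase h)
  have hJcard : J.card = I.card := by
    rw [hJ, Finset.card_insert_of_notMem huJ, Finset.card_erase_of_mem hvI]
    have : 1 ≤ I.card := Finset.card_pos.mpr ⟨v, hvI⟩
    omega
  have hJmax : IsMaxIndep G J := ⟨hJindep, fun K hK => hJcard ▸ hI.2 K hK⟩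
  have hvJ := hv J hJmax
  simp only [hJ, Finset.mem_insert, Finset.mem_erase] at hvJ
  rcases hvJ with rfl | ⟨hvv, _⟩
  · exact G.loopless.irrefl v huv
  · exact hvv rfl
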